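/- Define R-polynomials of words recursively by R_{u,∅}(q) = 1 if u = e, 0 otherwise, and R_{u,ws}(q) = R_{us,w}(q) if us < u, and R_{u,ws}(q) = q·R_{us,w}(q) + (q-1)·R_{u,w}(q) if us > u. Then for every word w and every u ∈ W, R_{u,w}(q) = Σ_{u ∈ D_{u,w}} (q-1)^{e_u} q^{d_u}, where the sum is over distinguished u-subwords of w, e_u is the number of skips and d_u = #{i : u_(i) < u_(i-1)}. -/

import Mathlib

open scoped Classical

namespace Deodhar

variable {B : Type*} {W : Type*} [Group W] {M : CoxeterMatrix B}

/-- Given a word `w` in the simple-reflection indices and a subword-selector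
`f : Fin w.length → Bool` (`f j = true` means the letter at position `j` is used,
`f j = false` means it is skipped, i.e. replaced by the identity `e`), the partial
product `u_(i) = u_1 ⋯ u_i` of the first `i` letters of the subword. -/
noncomputable def pp (cs : CoxeterSystem M W) (w : List B) (f : Fin w.length → Bool)
    (i : ℕ) : W :=
  ((((List.finRange w.length).take i)).map
    (fun j => if f j then cs.simple (w.get j) else 1)).prod

/-- The full product of the subword. -/
noncomputable def sprod (cs : CoxeterSystem M W) (w : List B)
    (f : Fin w.length → Bool) : W :=
  pp cs w f w.length

/-- The subword selected by `f` is distinguished: for each position `j`,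
`ℓ(u_(j+1)) ≤ ℓ(u_(j) · s_j)`, i.e. `u_(j+1) ≤ u_(j) s_j` in weak order. -/
def Distinguished (cs : CoxeterSystem M W) (w : List B) (f : Fin w.length → Bool) : Prop :=
  ∀ j : Fin w.length,
    cs.length (pp cs w f ((j : ℕ) + 1)) ≤ cs.length (pp cs w f (j : ℕ) * cs.simple (w.get j))

/-- The number of skips `e_u = #{j : u_j = e}`. -/
def skips (w : List B) (f : Fin w.length → Bool) : ℕ :=
  (Finset.univ.filter (fun j : Fin w.length => f j = false)).card

/-- The number of descents `d_u = #{j : u_(j+1) < u_(j)}`. -/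
noncomputable def descents (cs : CoxeterSystem M W) (w : List B)
    (f : Fin w.length → Bool) : ℕ :=
  (Finset.univ.filter (fun j : Fin w.length =>
    cs.length (pp cs w f ((j : ℕ) + 1)) < cs.length (pp cs w f (j : ℕ)))).card

/-- The reflection `s_j^{u_(j)} = u_(j) s_j u_(j)⁻¹` associated to position `j`. -/
noncomputable def reflAt (cs : CoxeterSystem M W) (w : List B) (f : Fin w.length → Bool)
    (j : Fin w.length) : W :=
  pp cs w f (j : ℕ) * cs.simple (w.get j) * (pp cs w f (j : ℕ))⁻¹

/-- The color `k_j = #{i < j : u_i ≠ e and s_i^{u_(i)} = s_j^{u_(j)}}` of position `j`. -/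
noncomputable def color (cs : CoxeterSystem M W) (w : List B) (f : Fin w.length → Bool)
    (j : Fin w.length) : ℕ :=
  (Finset.univ.filter (fun i : Fin w.length =>
    (i : ℕ) < (j : ℕ) ∧ f i = true ∧ reflAt cs w f i = reflAt cs w f j)).card

end Deodhar

namespace Deodhar

/-- Auxiliary recursion for the `R`-polynomials, processing the word from the right
(the list argument is the reversed word): `R_{u,∅} = δ_{u,e}`; `R_{u,ws} = R_{us,w}` if
`us < u`, and `R_{u,ws} = q·R_{us,w} + (q-1)·R_{u,w}` if `us > u`. -/
noncomputable def Raux {B : Type*} {W : Type*} [Group W] {M : CoxeterMatrix B}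
    (cs : CoxeterSystem M W) : List B → W → Polynomial ℤ
  | [], u => if u = 1 then 1 else 0
  | i :: rest, u =>
    if cs.length (u * cs.simple i) < cs.length u then Raux cs rest (u * cs.simple i)
    else Polynomial.X * Raux cs rest (u * cs.simple i) +
      (Polynomial.X - 1) * Raux cs rest u

/-- The `R`-polynomial `R_{u,w}(q)` of a word `w` and an element `u`. -/
noncomputable def Rpol {B : Type*} {W : Type*} [Group W] {M : CoxeterMatrix B}
    (cs : CoxeterSystem M W) (w : List B) (u : W) : Polynomial ℤ :=
  Raux cs w.reverse u

end Deodhar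


namespace DeodharAux

open Deodhar

/-- extend `f' : Fin n → Bool` to `Fin m` (`m = n+1`) with value `b` at the last spot. -/
def extf {m n : ℕ} (_hm : m = n + 1) (f' : Fin n → Bool) (b : Bool) : Fin m → Bool :=
  fun j => if h : (j : ℕ) < n then f' ⟨j, h⟩ else b

lemma sum_decomp {m n : ℕ} (hm : m = n + 1) {A : Type*} [AddCommMonoid A]
    (g : (Fin m → Bool) → A) :
    ∑ f : Fin m → Bool, g f
      = ∑ f' : Fin n → Bool, (g (extf hm f' true) + g (extf hm f' false)) := by
  subst hm
  have bij : Function.Bijective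
      (fun p : (Fin n → Bool) × Bool => extf rfl p.1 p.2) := by
    constructor
    · rintro ⟨f1, b1⟩ ⟨f2, b2⟩ h
      have h1 : ∀ j : Fin n, f1 j = f2 j := by
        intro j
        have := congrFun h (⟨j, by omega⟩ : Fin (n + 1))
        simpa [extf, j.isLt] using this
      have h2 : b1 = b2 := by
        have := congrFun h (⟨n, by omega⟩ : Fin (n + 1))
        simpa [extf] using this
      exact Prod.ext (funext h1) h2
    · intro f
      refine ⟨(fun j => f ⟨j, by omega⟩, f ⟨n, by omega⟩), ?_⟩
      funext j
      by_cases h : (j : ℕ) < n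
      · simp only [extf, dif_pos h]
      · have hj : j = ⟨n, by omega⟩ := by
          apply Fin.ext; have := j.isLt; simp; omega
        simp only [extf, dif_neg h, hj]
        rw [dif_neg (lt_irrefl n)]
  rw [← Fintype.sum_bijective _ bij _ g (fun p => rfl), Fintype.sum_prod_type]
  apply Finset.sum_congr rfl
  intro f' _
  rw [Fintype.sum_bool]

lemma card_decomp {m n : ℕ} (hm : m = n + 1) (p : Fin m → Prop) [DecidablePred p] :
    (Finset.univ.filter p).card
      = (Finset.univ.filter (fun j : Fin n => p ⟨j, by omega⟩)).card
        + (if p ⟨n, by omega⟩ then 1 else 0) := by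
  subst hm
  rw [Finset.card_filter, Finset.card_filter, Fin.sum_univ_castSucc]
  congr 1

lemma forall_decomp {m n : ℕ} (hm : m = n + 1) (p : Fin m → Prop) :
    (∀ j : Fin m, p j) ↔ (∀ j : Fin n, p ⟨j, by omega⟩) ∧ p ⟨n, by omega⟩ := by
  subst hm
  constructor
  · intro h
    exact ⟨fun j => h _, h _⟩
  · rintro ⟨h1, h2⟩ j
    by_cases h : (j : ℕ) < n
    · have := h1 ⟨j, h⟩
      convert this using 2
    · have hj : j = ⟨n, by omega⟩ := by
        apply Fin.ext; have := j.isLt; simp; omega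
      rw [hj]; exact h2

variable {B : Type*} {W : Type*} [Group W] {M : CoxeterMatrix B}

lemma pp_succ (cs : CoxeterSystem M W) (w : List B) (f : Fin w.length → Bool)
    {i : ℕ} (hi : i < w.length) :
    pp cs w f (i + 1) =
      pp cs w f i * (if f ⟨i, hi⟩ then cs.simple (w.get ⟨i, hi⟩) else 1) := by
  unfold pp
  have h1 : (List.finRange w.length)[i]? = some ⟨i, hi⟩ := by
    rw [List.getElem?_eq_getElem (by simpa using hi)]
    simp
  rw [List.take_succ, h1]
  simp

lemma take_finRange_concat (a : List B) (s : B) (i : ℕ) (hi : i ≤ a.length) :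
    (List.finRange (a ++ [s]).length).take i
      = ((List.finRange a.length).take i).map
          (fun (j : Fin a.length) =>
            (⟨(j : ℕ), lt_of_lt_of_le j.isLt (by simp)⟩ : Fin (a ++ [s]).length)) := by
  apply List.ext_getElem
  · rw [List.length_take, List.length_map, List.length_take]
    rw [List.length_finRange, List.length_finRange, List.length_append]
    simp; omega
  · intro k h1 h2
    simp only [List.getElem_take, List.getElem_map, List.getElem_finRange]
    apply Fin.ext
    simp

lemma pp_concat (cs : CoxeterSystem M W) (a : List B) (s : B)
    (f : Fin (a ++ [s]).length → Bool) (f' : Fin a.length → Bool)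
    (hres : ∀ j : Fin a.length,
      f ⟨(j : ℕ), lt_of_lt_of_le j.isLt (by simp)⟩ = f' j)
    (i : ℕ) (hi : i ≤ a.length) :
    pp cs (a ++ [s]) f i = pp cs a f' i := by
  unfold pp
  rw [take_finRange_concat a s i hi, List.map_map]
  congr 1
  apply List.map_congr_left
  intro j hj
  simp only [Function.comp_apply]
  have hg : (a ++ [s]).get ⟨(j : ℕ), lt_of_lt_of_le j.isLt (by simp)⟩ = a.get j := by
    simp [List.get_eq_getElem, List.getElem_append_left]
  rw [hg, hres j]

end DeodharAux

open DeodharAux in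
open Deodhar in
/-- For every word `w` and every `u ∈ W`,
`R_{u,w}(q) = Σ_{u ∈ D_{u,w}} (q-1)^{e_u} q^{d_u}`, the sum being over all distinguished
`u`-subwords of `w`, where `e_u` is the number of skips and `d_u = #{i : u_(i) < u_(i-1)}`. -/
theorem rpol_eq_sum_over_distinguished_subwords
    {B : Type*} {W : Type*} [Group W] [Finite W] {M : CoxeterMatrix B}
    (cs : CoxeterSystem M W) (w : List B) (u : W) :
    Rpol cs w u =
      ∑ f ∈ Finset.univ.filter (fun f : Fin w.length → Bool =>
          Distinguished cs w f ∧ sprod cs w f = u),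
        (Polynomial.X - 1) ^ skips w f * Polynomial.X ^ descents cs w f := by
  induction w using List.reverseRecOn generalizing u with
  | nil =>
    have hsp : ∀ f : Fin (List.length ([] : List B)) → Bool, sprod cs [] f = 1 :=
      fun _ => rfl
    have hdst : ∀ f : Fin (List.length ([] : List B)) → Bool, Distinguished cs [] f :=
      fun f j => j.elim0
    have hsk : ∀ f : Fin (List.length ([] : List B)) → Bool, skips ([] : List B) f = 0 := by
      intro f
      apply Finset.card_eq_zero.2
      apply Finset.eq_empty_of_forall_notMem
      intro j _
      exact j.elim0
    have hds : ∀ f : Fin (List.length ([] : List B)) → Bool, descents cs [] f = 0 := by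
      intro f
      apply Finset.card_eq_zero.2
      apply Finset.eq_empty_of_forall_notMem
      intro j _
      exact j.elim0
    by_cases hu : u = 1
    · subst hu
      rw [show Rpol cs ([] : List B) 1 = 1 by simp [Rpol, Raux]]
      rw [Finset.filter_true_of_mem (fun f _ => ⟨hdst f, hsp f⟩)]
      rw [Finset.sum_congr rfl (fun f _ => by
        rw [hsk f, hds f, pow_zero, pow_zero, one_mul])]
      simp
    · rw [show Rpol cs ([] : List B) u = 0 by simp [Rpol, Raux, hu]]
      rw [Finset.filter_false_of_mem, Finset.sum_empty]
      rintro f - ⟨-, h⟩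
      rw [hsp f] at h
      exact hu h.symm
  | append_singleton a s ih =>
    classical
    have hm : (a ++ [s]).length = a.length + 1 := by simp
    have hL : Rpol cs (a ++ [s]) u =
        if cs.length (u * cs.simple s) < cs.length u then Rpol cs a (u * cs.simple s)
        else Polynomial.X * Rpol cs a (u * cs.simple s) +
          (Polynomial.X - 1) * Rpol cs a u := by
      simp only [Rpol, List.reverse_append, List.reverse_cons, List.reverse_nil,
        List.nil_append, List.singleton_append, Raux]
    have key : ∀ (f' : Fin a.length → Bool) (b : Bool),
        (if (Distinguished cs (a ++ [s]) (extf hm f' b) ∧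
              sprod cs (a ++ [s]) (extf hm f' b) = u)
          then ((Polynomial.X : Polynomial ℤ) - 1) ^ skips (a ++ [s]) (extf hm f' b)
              * Polynomial.X ^ descents cs (a ++ [s]) (extf hm f' b) else 0)
        = (if (Distinguished cs a f' ∧
              cs.length (sprod cs a f' * (if b then cs.simple s else 1))
                ≤ cs.length (sprod cs a f' * cs.simple s) ∧
              sprod cs a f' * (if b then cs.simple s else 1) = u)
            then ((Polynomial.X : Polynomial ℤ) - 1) ^ (skips a f' + if b then 0 else 1)
                * Polynomial.X ^ (descents cs a f'
                    + if cs.length (sprod cs a f' * (if b then cs.simple s else 1))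
                        < cs.length (sprod cs a f') then 1 else 0)
            else 0) := by
      intro f' b
      set F := extf hm f' b with hF
      have hres : ∀ j : Fin a.length,
          F ⟨(j : ℕ), lt_of_lt_of_le j.isLt (by simp)⟩ = f' j := by
        intro j
        simp [hF, extf, j.isLt]
      have hppn : ∀ i : ℕ, i ≤ a.length → pp cs (a ++ [s]) F i = pp cs a f' i :=
        fun i hi => pp_concat cs a s F f' hres i hi
      have hlastF : F ⟨a.length, by omega⟩ = b := by
        simp [hF, extf]
      have hgetlast : (a ++ [s]).get ⟨a.length, by omega⟩ = s := by
        simp [List.get_eq_getElem]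
      have hgetlt : ∀ j : Fin a.length,
          (a ++ [s]).get ⟨(j : ℕ), by omega⟩ = a.get j := by
        intro j
        simp [List.get_eq_getElem, List.getElem_append_left]
      have hpps : pp cs (a ++ [s]) F (a.length + 1)
          = sprod cs a f' * (if b then cs.simple s else 1) := by
        rw [pp_succ cs (a ++ [s]) F (by omega), hlastF, hgetlast, hppn a.length le_rfl]
        rfl
      have hsprod : sprod cs (a ++ [s]) F
          = sprod cs a f' * (if b then cs.simple s else 1) := by
        rw [sprod, hm, hpps]
      have hskips : skips (a ++ [s]) F = skips a f' + (if b then 0 else 1) := by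
        rw [skips, card_decomp hm]
        congr 1
        · rw [skips]
          congr 1
          apply Finset.filter_congr
          intro j _
          rw [show F ⟨(j : ℕ), by omega⟩ = f' j from hres j]
        · rw [show F ⟨a.length, by omega⟩ = b from hlastF]
          cases b <;> simp
      have hdesc : descents cs (a ++ [s]) F = descents cs a f'
          + (if cs.length (sprod cs a f' * (if b then cs.simple s else 1))
              < cs.length (sprod cs a f') then 1 else 0) := by
        rw [descents, card_decomp hm]
        congr 1
        · rw [descents]
          congr 1
          apply Finset.filter_congr
          intro j _
          rw [show pp cs (a ++ [s]) F ((j : ℕ) + 1) = pp cs a f' ((j : ℕ) + 1) from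
                hppn _ (by omega),
              show pp cs (a ++ [s]) F (j : ℕ) = pp cs a f' (j : ℕ) from hppn _ (by omega)]
        · rw [show pp cs (a ++ [s]) F (((⟨a.length, by omega⟩ : Fin (a ++ [s]).length) : ℕ) + 1)
                = sprod cs a f' * (if b then cs.simple s else 1) from hpps,
              show pp cs (a ++ [s]) F ((⟨a.length, by omega⟩ : Fin (a ++ [s]).length) : ℕ)
                = sprod cs a f' from hppn a.length le_rfl]
      have hdist : Distinguished cs (a ++ [s]) F ↔
          (Distinguished cs a f' ∧
            cs.length (sprod cs a f' * (if b then cs.simple s else 1))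
              ≤ cs.length (sprod cs a f' * cs.simple s)) := by
        rw [Distinguished, forall_decomp hm]
        apply and_congr
        · rw [Distinguished]
          apply forall_congr'
          intro j
          rw [show pp cs (a ++ [s]) F ((j : ℕ) + 1) = pp cs a f' ((j : ℕ) + 1) from
                hppn _ (by omega),
              show pp cs (a ++ [s]) F (j : ℕ) = pp cs a f' (j : ℕ) from hppn _ (by omega),
              hgetlt j]
        · rw [show pp cs (a ++ [s]) F (((⟨a.length, by omega⟩ : Fin (a ++ [s]).length) : ℕ) + 1)
                = sprod cs a f' * (if b then cs.simple s else 1) from hpps,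
              show pp cs (a ++ [s]) F ((⟨a.length, by omega⟩ : Fin (a ++ [s]).length) : ℕ)
                = sprod cs a f' from hppn a.length le_rfl,
              show (a ++ [s]).get ⟨a.length, by omega⟩ = s from hgetlast]
      have hCond : (Distinguished cs (a ++ [s]) F ∧ sprod cs (a ++ [s]) F = u) ↔
          (Distinguished cs a f' ∧
            cs.length (sprod cs a f' * (if b then cs.simple s else 1))
              ≤ cs.length (sprod cs a f' * cs.simple s) ∧
            sprod cs a f' * (if b then cs.simple s else 1) = u) := by
        rw [hsprod, hdist, and_assoc]
      rw [hskips, hdesc]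
      exact if_congr hCond rfl rfl
    rw [hL]
    by_cases hlt : cs.length (u * cs.simple s) < cs.length u
    · rw [if_pos hlt]
      have hTrue : ∀ f' : Fin a.length → Bool,
          (if (Distinguished cs a f' ∧
              cs.length (sprod cs a f' * (if (true : Bool) then cs.simple s else 1))
                ≤ cs.length (sprod cs a f' * cs.simple s) ∧
              sprod cs a f' * (if (true : Bool) then cs.simple s else 1) = u)
            then ((Polynomial.X : Polynomial ℤ) - 1) ^ (skips a f' + if (true : Bool) then 0 else 1)
                * Polynomial.X ^ (descents cs a f'
                    + if cs.length (sprod cs a f' * (if (true : Bool) then cs.simple s else 1))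
                        < cs.length (sprod cs a f') then 1 else 0)
            else 0)
          = (if (Distinguished cs a f' ∧ sprod cs a f' = u * cs.simple s)
              then ((Polynomial.X : Polynomial ℤ) - 1) ^ skips a f'
                  * Polynomial.X ^ descents cs a f' else 0) := by
        intro f'
        simp only [if_true, mul_one, add_zero]
        by_cases hc : Distinguished cs a f' ∧ sprod cs a f' = u * cs.simple s
        · obtain ⟨h1, h2⟩ := hc
          have h3 : sprod cs a f' * cs.simple s = u := by
            rw [h2, cs.simple_mul_simple_cancel_right]
          have h4 : ¬ cs.length (sprod cs a f' * cs.simple s) < cs.length (sprod cs a f') := by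
            rw [h3, h2]
            omega
          have hcondL : Distinguished cs a f' ∧
              cs.length (sprod cs a f' * cs.simple s) ≤ cs.length (sprod cs a f' * cs.simple s) ∧
              sprod cs a f' * cs.simple s = u := ⟨h1, le_rfl, h3⟩
          rw [if_pos hcondL,
            if_pos (show Distinguished cs a f' ∧ sprod cs a f' = u * cs.simple s from ⟨h1, h2⟩),
            if_neg h4, add_zero]
        · rw [if_neg, if_neg hc]
          rintro ⟨h1, -, h3⟩
          exact hc ⟨h1, by rw [← h3, cs.simple_mul_simple_cancel_right]⟩
      have hFalse : ∀ f' : Fin a.length → Bool,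
          (if (Distinguished cs a f' ∧
              cs.length (sprod cs a f' * (if (false : Bool) then cs.simple s else 1))
                ≤ cs.length (sprod cs a f' * cs.simple s) ∧
              sprod cs a f' * (if (false : Bool) then cs.simple s else 1) = u)
            then ((Polynomial.X : Polynomial ℤ) - 1) ^ (skips a f' + if (false : Bool) then 0 else 1)
                * Polynomial.X ^ (descents cs a f'
                    + if cs.length (sprod cs a f' * (if (false : Bool) then cs.simple s else 1))
                        < cs.length (sprod cs a f') then 1 else 0)
            else 0) = 0 := by
        intro f'
        simp only [Bool.false_eq_true, if_false, mul_one]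
        rw [if_neg]
        rintro ⟨-, h2, h3⟩
        rw [h3] at h2
        exact absurd h2 (not_le.2 hlt)
      calc Rpol cs a (u * cs.simple s)
          = ∑ f ∈ Finset.univ.filter (fun f : Fin a.length → Bool =>
              Distinguished cs a f ∧ sprod cs a f = u * cs.simple s),
              (Polynomial.X - 1) ^ skips a f * Polynomial.X ^ descents cs a f := ih _
        _ = ∑ f' : Fin a.length → Bool,
              (if (Distinguished cs a f' ∧ sprod cs a f' = u * cs.simple s)
                then ((Polynomial.X : Polynomial ℤ) - 1) ^ skips a f'
                    * Polynomial.X ^ descents cs a f' else 0) := Finset.sum_filter _ _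
        _ = _ := by
            rw [Finset.sum_filter, sum_decomp hm]
            apply Finset.sum_congr rfl
            intro f' _
            rw [key f' true, key f' false, hTrue f', hFalse f', add_zero]
    · rw [if_neg hlt]
      have hgt : cs.length u < cs.length (u * cs.simple s) := by
        have := cs.length_mul_simple_ne u s
        omega
      have hTrue : ∀ f' : Fin a.length → Bool,
          (if (Distinguished cs a f' ∧
              cs.length (sprod cs a f' * (if (true : Bool) then cs.simple s else 1))
                ≤ cs.length (sprod cs a f' * cs.simple s) ∧
              sprod cs a f' * (if (true : Bool) then cs.simple s else 1) = u)
            then ((Polynomial.X : Polynomial ℤ) - 1) ^ (skips a f' + if (true : Bool) then 0 else 1)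
                * Polynomial.X ^ (descents cs a f'
                    + if cs.length (sprod cs a f' * (if (true : Bool) then cs.simple s else 1))
                        < cs.length (sprod cs a f') then 1 else 0)
            else 0)
          = (if (Distinguished cs a f' ∧ sprod cs a f' = u * cs.simple s)
              then Polynomial.X * (((Polynomial.X : Polynomial ℤ) - 1) ^ skips a f'
                  * Polynomial.X ^ descents cs a f') else 0) := by
        intro f'
        simp only [if_true, mul_one, add_zero]
        by_cases hc : Distinguished cs a f' ∧ sprod cs a f' = u * cs.simple s
        · obtain ⟨h1, h2⟩ := hc
          have h3 : sprod cs a f' * cs.simple s = u := by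
            rw [h2, cs.simple_mul_simple_cancel_right]
          have h4 : cs.length (sprod cs a f' * cs.simple s) < cs.length (sprod cs a f') := by
            rw [h3, h2]
            exact hgt
          have hcondL : Distinguished cs a f' ∧
              cs.length (sprod cs a f' * cs.simple s) ≤ cs.length (sprod cs a f' * cs.simple s) ∧
              sprod cs a f' * cs.simple s = u := ⟨h1, le_rfl, h3⟩
          rw [if_pos hcondL,
            if_pos (show Distinguished cs a f' ∧ sprod cs a f' = u * cs.simple s from ⟨h1, h2⟩),
            if_pos h4, pow_succ]
          ring
        · rw [if_neg, if_neg hc]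
          rintro ⟨h1, -, h3⟩
          exact hc ⟨h1, by rw [← h3, cs.simple_mul_simple_cancel_right]⟩
      have hFalse : ∀ f' : Fin a.length → Bool,
          (if (Distinguished cs a f' ∧
              cs.length (sprod cs a f' * (if (false : Bool) then cs.simple s else 1))
                ≤ cs.length (sprod cs a f' * cs.simple s) ∧
              sprod cs a f' * (if (false : Bool) then cs.simple s else 1) = u)
            then ((Polynomial.X : Polynomial ℤ) - 1) ^ (skips a f' + if (false : Bool) then 0 else 1)
                * Polynomial.X ^ (descents cs a f'
                    + if cs.length (sprod cs a f' * (if (false : Bool) then cs.simple s else 1))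
                        < cs.length (sprod cs a f') then 1 else 0)
            else 0)
          = (if (Distinguished cs a f' ∧ sprod cs a f' = u)
              then ((Polynomial.X : Polynomial ℤ) - 1) * (((Polynomial.X : Polynomial ℤ) - 1) ^ skips a f'
                  * Polynomial.X ^ descents cs a f') else 0) := by
        intro f'
        simp only [Bool.false_eq_true, if_false, mul_one]
        by_cases hc : Distinguished cs a f' ∧ sprod cs a f' = u
        · obtain ⟨h1, h2⟩ := hc
          have h4 : ¬ cs.length (sprod cs a f') < cs.length (sprod cs a f') := lt_irrefl _
          have h5 : cs.length (sprod cs a f') ≤ cs.length (sprod cs a f' * cs.simple s) := by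
            rw [h2]
            exact hgt.le
          have hcondL : Distinguished cs a f' ∧
              cs.length (sprod cs a f') ≤ cs.length (sprod cs a f' * cs.simple s) ∧
              sprod cs a f' = u := ⟨h1, h5, h2⟩
          rw [if_pos hcondL,
            if_pos (show Distinguished cs a f' ∧ sprod cs a f' = u from ⟨h1, h2⟩),
            if_neg h4, add_zero, pow_succ]
          ring
        · rw [if_neg, if_neg hc]
          rintro ⟨h1, -, h3⟩
          exact hc ⟨h1, h3⟩
      calc Polynomial.X * Rpol cs a (u * cs.simple s) + (Polynomial.X - 1) * Rpol cs a u
          = Polynomial.X * (∑ f' : Fin a.length → Bool,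
              (if (Distinguished cs a f' ∧ sprod cs a f' = u * cs.simple s)
                then ((Polynomial.X : Polynomial ℤ) - 1) ^ skips a f'
                    * Polynomial.X ^ descents cs a f' else 0))
            + (Polynomial.X - 1) * (∑ f' : Fin a.length → Bool,
              (if (Distinguished cs a f' ∧ sprod cs a f' = u)
                then ((Polynomial.X : Polynomial ℤ) - 1) ^ skips a f'
                    * Polynomial.X ^ descents cs a f' else 0)) := by
            rw [ih (u * cs.simple s), ih u, Finset.sum_filter, Finset.sum_filter]
        _ = ∑ f' : Fin a.length → Bool,
              ((if (Distinguished cs a f' ∧ sprod cs a f' = u * cs.simple s)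
                then Polynomial.X * (((Polynomial.X : Polynomial ℤ) - 1) ^ skips a f'
                    * Polynomial.X ^ descents cs a f') else 0)
              + (if (Distinguished cs a f' ∧ sprod cs a f' = u)
                then ((Polynomial.X : Polynomial ℤ) - 1) * (((Polynomial.X : Polynomial ℤ) - 1) ^ skips a f'
                    * Polynomial.X ^ descents cs a f') else 0)) := by
            rw [Finset.sum_add_distrib, Finset.mul_sum, Finset.mul_sum]
            congr 1 <;> (apply Finset.sum_congr rfl; intro f' _; rw [mul_ite, mul_zero])
        _ = _ := by
            rw [Finset.sum_filter, sum_decomp hm]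
            apply Finset.sum_congr rfl
            intro f' _
            rw [key f' true, key f' false, hTrue f', hFalse f']
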